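/- Let b ∈ ℂ, q ≥ 1 an integer, r₀ > 0, and let f be holomorphic on the punctured disk {z : 0 < |z - b| < r₀} with f(z) = g(z)/(z - b)^q, where g is holomorphic on the disk {z : |z - b| < r₀} and g(b) ≠ 0. Then there exist r ∈ (0, r₀] and constants c₁, c₂ > 0 such that for all z with 0 < |z - b| < r one has c₁ |f(z)|^{1 + 1/q} ≤ |f'(z)| ≤ c₂ |f(z)|^{1 + 1/q}. -/

import Mathlib

/-- If `f` is holomorphic on the punctured disk of radius `r₀` around `b`
and has a pole of order `q` at `b`, then there are `r ∈ (0, r₀]` and constants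
`c₁, c₂ > 0` with `c₁ * |f z| ^ (1 + 1/q) ≤ |f' z| ≤ c₂ * |f z| ^ (1 + 1/q)`
for `0 < |z - b| < r`. -/
theorem pole_deriv_vs_value_estimate (b : ℂ) (q : ℕ) (hq : 1 ≤ q) (r₀ : ℝ) (hr₀ : 0 < r₀)
    (f g : ℂ → ℂ)
    (hf : DifferentiableOn ℂ f {z | 0 < ‖z - b‖ ∧ ‖z - b‖ < r₀})
    (hg : DifferentiableOn ℂ g (Metric.ball b r₀))
    (hgb : g b ≠ 0)
    (hfg : ∀ z, 0 < ‖z - b‖ → ‖z - b‖ < r₀ →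
      f z = g z / (z - b) ^ q) :
    ∃ r : ℝ, 0 < r ∧ r ≤ r₀ ∧ ∃ c₁ c₂ : ℝ, 0 < c₁ ∧ 0 < c₂ ∧
      ∀ z : ℂ, 0 < ‖z - b‖ → ‖z - b‖ < r →
        c₁ * ‖f z‖ ^ (1 + 1 / (q : ℝ)) ≤ ‖deriv f z‖ ∧
        ‖deriv f z‖ ≤ c₂ * ‖f z‖ ^ (1 + 1 / (q : ℝ)) := by
  have hq0 : (0:ℝ) < q := by exact_mod_cast Nat.lt_of_lt_of_le Nat.zero_lt_one hq
  have hA : 0 < ‖g b‖ := by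
    exact norm_pos_iff.mpr hgb
  set A : ℝ := ‖g b‖ with hAdef
  set e : ℝ := 1 + 1 / (q : ℝ) with he
  have he0 : (0:ℝ) ≤ e := by positivity
  set h : ℂ → ℂ := fun z => deriv g z * (z - b) - (q : ℂ) * g z with hhdef
  have hmem : b ∈ Metric.ball b r₀ := by simp [hr₀]
  -- continuity facts
  have hganal : AnalyticOnNhd ℂ g (Metric.ball b r₀) :=
    hg.analyticOnNhd Metric.isOpen_ball
  have hg'cont : ContinuousAt (deriv g) b :=
    (hganal.deriv.continuousOn).continuousAt (Metric.isOpen_ball.mem_nhds hmem)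
  have hgcont : ContinuousAt g b :=
    hg.continuousOn.continuousAt (Metric.isOpen_ball.mem_nhds hmem)
  have hhcont : ContinuousAt h b := by
    exact ((hg'cont.mul ((continuousAt_id).sub continuousAt_const)).sub
      (continuousAt_const.mul hgcont))
  have hhb : ‖h b‖ = q * A := by
    simp [hhdef, hAdef]
  -- eventual bounds
  have habscont : ContinuousAt (fun z => ‖g z‖) b :=
    continuous_norm.continuousAt.comp hgcont
  have habsh : ContinuousAt (fun z => ‖h z‖) b :=
    continuous_norm.continuousAt.comp hhcont
  have ev1 : ∀ᶠ z in nhds b, A / 2 < ‖g z‖ :=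
    habscont.eventually (eventually_gt_nhds (by linarith))
  have ev2 : ∀ᶠ z in nhds b, ‖g z‖ < 2 * A :=
    habscont.eventually (eventually_lt_nhds (by linarith))
  have ev3 : ∀ᶠ z in nhds b, q * A / 2 < ‖h z‖ := by
    have hlt : (q : ℝ) * A / 2 < ‖h b‖ := by rw [hhb]; nlinarith
    exact habsh.eventually (eventually_gt_nhds hlt)
  have ev4 : ∀ᶠ z in nhds b, ‖h z‖ < 2 * (q * A) := by
    have hlt : ‖h b‖ < 2 * ((q : ℝ) * A) := by rw [hhb]; nlinarith
    exact habsh.eventually (eventually_lt_nhds hlt)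
  obtain ⟨δ, hδ0, hδ⟩ := Metric.eventually_nhds_iff_ball.mp (((ev1.and ev2).and (ev3.and ev4)))
  refine ⟨min δ r₀, lt_min hδ0 hr₀, min_le_right _ _,
    (q * A / 2) / (2 * A) ^ e, (2 * (q * A)) / (A / 2) ^ e, by positivity, by positivity, ?_⟩
  intro z hz1 hz2
  have hzb : z - b ≠ 0 := by
    intro H; rw [H] at hz1; simp at hz1
  have hzr₀ : ‖z - b‖ < r₀ := lt_of_lt_of_le hz2 (min_le_right _ _)
  have hzball : z ∈ Metric.ball b r₀ := by
    simpa [Metric.mem_ball, Complex.dist_eq] using hzr₀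
  obtain ⟨⟨hb1, hb2⟩, hb3, hb4⟩ := hδ z (by
    simpa [Metric.mem_ball, Complex.dist_eq] using lt_of_lt_of_le hz2 (min_le_left _ _))
  -- derivative of f at z
  have hgd : HasDerivAt g (deriv g z) z :=
    (hg.differentiableAt (Metric.isOpen_ball.mem_nhds hzball)).hasDerivAt
  have hpd : HasDerivAt (fun w => (w - b) ^ q) ((q : ℂ) * (z - b) ^ (q - 1) * 1) z :=
    ((hasDerivAt_id z).sub_const b).pow q
  have hpow_ne : (z - b) ^ q ≠ 0 := pow_ne_zero _ hzb
  have hdiv : HasDerivAt (fun w => g w / (w - b) ^ q)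
      ((deriv g z * (z - b) ^ q - g z * ((q : ℂ) * (z - b) ^ (q - 1) * 1)) / ((z - b) ^ q) ^ 2)
      z := hgd.div hpd hpow_ne
  have hderiv_eq : (deriv g z * (z - b) ^ q - g z * ((q : ℂ) * (z - b) ^ (q - 1) * 1)) /
      ((z - b) ^ q) ^ 2 = h z / (z - b) ^ (q + 1) := by
    obtain ⟨m, rfl⟩ : ∃ m, q = m + 1 := ⟨q - 1, (Nat.succ_pred_eq_of_pos hq).symm⟩
    simp only [hhdef, Nat.add_sub_cancel]
    field_simp
    ring
  have hSopen : IsOpen {w : ℂ | 0 < ‖w - b‖ ∧ ‖w - b‖ < r₀} := by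
    have : {w : ℂ | 0 < ‖w - b‖ ∧ ‖w - b‖ < r₀} =
        (fun w => ‖w - b‖) ⁻¹' (Set.Ioo 0 r₀) := by
      ext w; simp [Set.mem_Ioo]
    rw [this]
    exact IsOpen.preimage (continuous_norm.comp (continuous_id.sub continuous_const))
      isOpen_Ioo
  have hfeq : f =ᶠ[nhds z] (fun w => g w / (w - b) ^ q) := by
    filter_upwards [hSopen.mem_nhds ⟨hz1, hzr₀⟩] with w hw
    exact hfg w hw.1 hw.2
  have hdf : deriv f z = h z / (z - b) ^ (q + 1) := by
    rw [hfeq.deriv_eq, hdiv.deriv, hderiv_eq]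
  -- absolute values
  have habs_df : ‖deriv f z‖ = ‖h z‖ / ‖z - b‖ ^ (q + 1) := by
    rw [hdf, norm_div, norm_pow]
  have hfz : ‖f z‖ = ‖g z‖ / ‖z - b‖ ^ q := by
    rw [hfg z hz1 hzr₀, norm_div, norm_pow]
  have hkey : ‖f z‖ ^ e =
      ‖g z‖ ^ e / ‖z - b‖ ^ (q + 1) := by
    rw [hfz, Real.div_rpow (by positivity) (by positivity)]
    congr 1
    rw [← Real.rpow_natCast (‖z - b‖) q, ← Real.rpow_mul hz1.le]
    have hqne : (q : ℝ) ≠ 0 := hq0.ne'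
    have hexp : (q : ℝ) * e = ((q + 1 : ℕ) : ℝ) := by
      rw [he]; push_cast; field_simp
    rw [hexp, Real.rpow_natCast]
  have hD : (0:ℝ) < ‖z - b‖ ^ (q + 1) := by positivity
  constructor
  · rw [habs_df, hkey, ← mul_div_assoc]
    gcongr
    calc (q * A / 2) / (2 * A) ^ e * ‖g z‖ ^ e
        ≤ (q * A / 2) / (2 * A) ^ e * (2 * A) ^ e := by
          gcongr
      _ = q * A / 2 := by
          rw [div_mul_cancel₀]
          positivity
      _ ≤ ‖h z‖ := hb3.le
  · rw [habs_df, hkey, ← mul_div_assoc]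
    gcongr
    calc ‖h z‖ ≤ 2 * (q * A) := hb4.le
      _ = (2 * (q * A)) / (A / 2) ^ e * (A / 2) ^ e := by
          rw [div_mul_cancel₀]
          positivity
      _ ≤ (2 * (q * A)) / (A / 2) ^ e * ‖g z‖ ^ e := by
          gcongr
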